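/- Let g₈ be the Lie algebra with complex structure J given by the (1,0)-basis equations dω¹ = 2i ω¹∧ω³ + ω³∧ω̄³, dω² = −2i ω²∧ω³, dω³ = 0. Then the (2,0)-form ω²∧ω³ is ∂-closed, ∂̄-closed, and d-exact, but it is not ∂∂̄-exact. Consequently (g₈, J) does not satisfy the ∂∂̄-lemma at the Lie algebra level. -/

import Mathlib

noncomputable section

/-- The space of invariant complex forms: the exterior algebra over the span of
`ω¹, ω², ω³, ω̄¹, ω̄², ω̄³` (indexed `0,…,5`). -/
abbrev Lambda : Type := ExteriorAlgebra ℂ (Fin 6 → ℂ)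

/-- The generators `ω¹, ω², ω³, ω̄¹, ω̄², ω̄³` as degree-one elements. -/
def w (i : Fin 6) : Lambda := ExteriorAlgebra.ι ℂ (Pi.single i 1)

/-- Antiderivation property (Leibniz rule against `1`-forms): the defining extension
property of (the bigraded pieces of) the Chevalley–Eilenberg differential. -/
def IsAntideriv (D : Lambda →ₗ[ℂ] Lambda) : Prop :=
  D 1 = 0 ∧ ∀ (v : Fin 6 → ℂ) (x : Lambda),
    D (ExteriorAlgebra.ι ℂ v * x) =
      D (ExteriorAlgebra.ι ℂ v) * x - ExteriorAlgebra.ι ℂ v * D x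

/-- The generic Hermitian form
`2F = i(r²ω¹∧ω̄¹ + s²ω²∧ω̄² + t²ω³∧ω̄³) + uω¹∧ω̄² − ūω²∧ω̄¹ + vω²∧ω̄³ − v̄ω³∧ω̄²
  + zω¹∧ω̄³ − z̄ω³∧ω̄¹`. -/
def Fherm (r s t : ℝ) (u v z : ℂ) : Lambda :=
  (1 / 2 : ℂ) •
    (Complex.I • ((r : ℂ) ^ 2 • (w 0 * w 3) + (s : ℂ) ^ 2 • (w 1 * w 4) +
        (t : ℂ) ^ 2 • (w 2 * w 5)) +
      u • (w 0 * w 4) - (starRingEnd ℂ) u • (w 1 * w 3) +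
      v • (w 1 * w 5) - (starRingEnd ℂ) v • (w 2 * w 4) +
      z • (w 0 * w 5) - (starRingEnd ℂ) z • (w 2 * w 3))

/-- Positivity constraints making `Fherm r s t u v z` a Hermitian metric. -/
def HermPos (r s t : ℝ) (u v z : ℂ) : Prop :=
  r ≠ 0 ∧ s ≠ 0 ∧ t ≠ 0 ∧
  r ^ 2 * s ^ 2 > Complex.normSq u ∧ s ^ 2 * t ^ 2 > Complex.normSq v ∧
  r ^ 2 * t ^ 2 > Complex.normSq z ∧
  r ^ 2 * s ^ 2 * t ^ 2 +
      2 * (Complex.I * (starRingEnd ℂ) u * (starRingEnd ℂ) v * z).re >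
    t ^ 2 * Complex.normSq u + r ^ 2 * Complex.normSq v + s ^ 2 * Complex.normSq z

/-! ### Auxiliary machinery -/


/-- Induction principle: a submodule containing `1` and stable under left
multiplication by one-forms is everything. -/
lemma Lambda.mul_induction {N : Submodule ℂ Lambda} (h1 : (1 : Lambda) ∈ N)
    (hι : ∀ (v : Fin 6 → ℂ) (x : Lambda), x ∈ N → ExteriorAlgebra.ι ℂ v * x ∈ N)
    (x : Lambda) : x ∈ N := by
  have hm : ∀ (n : ℕ) (v : Fin n → (Fin 6 → ℂ)), ExteriorAlgebra.ιMulti ℂ n v ∈ N := by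
    intro n
    induction n with
    | zero => intro v; simpa using h1
    | succ n ih =>
      intro v
      rw [ExteriorAlgebra.ιMulti_succ_apply]
      exact hι _ _ (ih _)
  have htop : (⊤ : Submodule ℂ Lambda) ≤ N := by
    rw [← ExteriorAlgebra.ιMulti_span (R := ℂ) (M := Fin 6 → ℂ), Submodule.span_le]
    rintro _ ⟨⟨n, v⟩, rfl⟩
    exact hm n v
  exact htop trivial

lemma iota_eq_sum (v : Fin 6 → ℂ) :
    ExteriorAlgebra.ι ℂ v = ∑ i : Fin 6, v i • w i := by
  have hv : v = ∑ i : Fin 6, v i • (Pi.single i 1 : Fin 6 → ℂ) := by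
    ext j
    simp [Pi.single_apply]
  conv_lhs => rw [hv]
  simp [w]

/-- The projection that kills the "barred" coordinates `3, 4, 5`. -/
def pr : (Fin 6 → ℂ) →ₗ[ℂ] (Fin 6 → ℂ) :=
  LinearMap.pi ![LinearMap.proj 0, LinearMap.proj 1, LinearMap.proj 2, 0, 0, 0]

lemma pr_single0 : pr (Pi.single (0 : Fin 6) (1 : ℂ)) = Pi.single 0 1 := by
  ext j; fin_cases j <;> simp [pr, Pi.single_apply] <;> rfl
lemma pr_single1 : pr (Pi.single (1 : Fin 6) (1 : ℂ)) = Pi.single 1 1 := by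
  ext j; fin_cases j <;> simp [pr, Pi.single_apply] <;> rfl
lemma pr_single2 : pr (Pi.single (2 : Fin 6) (1 : ℂ)) = Pi.single 2 1 := by
  ext j; fin_cases j <;> simp [pr, Pi.single_apply] <;> rfl
lemma pr_single3 : pr (Pi.single (3 : Fin 6) (1 : ℂ)) = 0 := by
  ext j; fin_cases j <;> simp [pr, Pi.single_apply] <;> rfl
lemma pr_single4 : pr (Pi.single (4 : Fin 6) (1 : ℂ)) = 0 := by
  ext j; fin_cases j <;> simp [pr, Pi.single_apply] <;> rfl
lemma pr_single5 : pr (Pi.single (5 : Fin 6) (1 : ℂ)) = 0 := by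
  ext j; fin_cases j <;> simp [pr, Pi.single_apply] <;> rfl

lemma pr_apply0 (v : Fin 6 → ℂ) : pr v 0 = v 0 := rfl
lemma pr_apply1 (v : Fin 6 → ℂ) : pr v 1 = v 1 := rfl
lemma pr_apply2 (v : Fin 6 → ℂ) : pr v 2 = v 2 := rfl
lemma pr_apply3 (v : Fin 6 → ℂ) : pr v 3 = 0 := rfl
lemma pr_apply4 (v : Fin 6 → ℂ) : pr v 4 = 0 := rfl
lemma pr_apply5 (v : Fin 6 → ℂ) : pr v 5 = 0 := rfl

/-- Projection onto bar-degree-zero forms. -/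
def P0 : Lambda →ₐ[ℂ] Lambda := ExteriorAlgebra.map pr

lemma P0_w0 : P0 (w 0) = w 0 := by
  rw [w, P0, ExteriorAlgebra.map_apply_ι, pr_single0, ← w]
lemma P0_w1 : P0 (w 1) = w 1 := by
  rw [w, P0, ExteriorAlgebra.map_apply_ι, pr_single1, ← w]
lemma P0_w2 : P0 (w 2) = w 2 := by
  rw [w, P0, ExteriorAlgebra.map_apply_ι, pr_single2, ← w]
lemma P0_w3 : P0 (w 3) = 0 := by
  rw [w, P0, ExteriorAlgebra.map_apply_ι, pr_single3, map_zero]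
lemma P0_w4 : P0 (w 4) = 0 := by
  rw [w, P0, ExteriorAlgebra.map_apply_ι, pr_single4, map_zero]
lemma P0_w5 : P0 (w 5) = 0 := by
  rw [w, P0, ExteriorAlgebra.map_apply_ι, pr_single5, map_zero]

/-! ### A linear functional detecting `ω² ∧ ω³` -/

def rows12 : (Fin 6 → ℂ) →ₗ[ℂ] (Fin 2 → ℂ) :=
  LinearMap.pi ![LinearMap.proj 1, LinearMap.proj 2]

def detf : ((Fin 6 → ℂ) [⋀^Fin 2]→ₗ[ℂ] ℂ) :=
  (Matrix.detRowAlternating (n := Fin 2) (R := ℂ)).compLinearMap rows12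

def ff : ∀ i : ℕ, ((Fin 6 → ℂ) [⋀^Fin i]→ₗ[ℂ] ℂ)
  | 2 => detf
  | _ => 0

def phi : Lambda →ₗ[ℂ] ℂ := ExteriorAlgebra.liftAlternating ff

lemma phi_w12 : phi (w 1 * w 2) = 1 := by
  rw [phi, w, w, ExteriorAlgebra.liftAlternating_ι_mul,
    ExteriorAlgebra.liftAlternating_ι]
  show (ff 2).curryLeft (Pi.single 1 1) ![Pi.single 2 1] = 1
  rw [show ff 2 = detf from rfl, AlternatingMap.curryLeft_apply_apply]
  rw [detf, AlternatingMap.compLinearMap_apply]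
  rw [Matrix.detRowAlternating]
  show Matrix.det (Matrix.of fun i => rows12 (Matrix.vecCons (Pi.single 1 1) ![Pi.single 2 1] i)) = 1
  rw [Matrix.det_fin_two]
  simp [rows12, Pi.single_apply]

/-! ### The theorem -/


set_option maxHeartbeats 1000000 in
/-- on `(g₈, J)` with `dω¹ = 2iω¹∧ω³ + ω³∧ω̄³`, `dω² = −2iω²∧ω³`,
`dω³ = 0`, the `(2,0)`-form `ω²∧ω³` is `∂`-closed, `∂̄`-closed and `d`-exact, but not
`∂∂̄`-exact; hence the `∂∂̄`-lemma fails for `(g₈, J)`. -/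
theorem stmt17
    (Dp Db : Lambda →ₗ[ℂ] Lambda) (hDp : IsAntideriv Dp) (hDb : IsAntideriv Db)
    (hp0 : Dp (w 0) = (2 * Complex.I) • (w 0 * w 2))
    (hp1 : Dp (w 1) = (-(2 * Complex.I)) • (w 1 * w 2))
    (hp2 : Dp (w 2) = 0)
    (hp3 : Dp (w 3) = w 5 * w 2)
    (hp4 : Dp (w 4) = 0)
    (hp5 : Dp (w 5) = 0)
    (hb0 : Db (w 0) = w 2 * w 5)
    (hb1 : Db (w 1) = 0)
    (hb2 : Db (w 2) = 0)
    (hb3 : Db (w 3) = (-(2 * Complex.I)) • (w 3 * w 5))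
    (hb4 : Db (w 4) = (2 * Complex.I) • (w 4 * w 5))
    (hb5 : Db (w 5) = 0) :
    Dp (w 1 * w 2) = 0 ∧
    Db (w 1 * w 2) = 0 ∧
    (∃ x : Lambda, Dp x + Db x = w 1 * w 2) ∧
    ¬(∃ y : Lambda, Dp (Db y) = w 1 * w 2) := by
  obtain ⟨hDp1, hDpL⟩ := hDp
  obtain ⟨hDb1, hDbL⟩ := hDb
  have hw22 : w 2 * w 2 = 0 := by
    rw [w]; exact ExteriorAlgebra.ι_sq_zero _
  refine ⟨?_, ?_, ?_, ?_⟩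
  · -- ∂-closed
    have := hDpL (Pi.single 1 1) (w 2)
    rw [← w] at this
    rw [this, hp1, hp2, mul_zero, sub_zero, smul_mul_assoc, mul_assoc, hw22,
      mul_zero, smul_zero]
  · -- ∂̄-closed
    have := hDbL (Pi.single 1 1) (w 2)
    rw [← w] at this
    rw [this, hb1, hb2, mul_zero, sub_zero, zero_mul]
  · -- d-exact
    refine ⟨(Complex.I / 2) • w 1, ?_⟩
    rw [map_smul, map_smul, hp1, hb1, smul_zero, add_zero, smul_smul]
    have hc : Complex.I / 2 * -(2 * Complex.I) = 1 := by
      have := Complex.I_mul_I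
      field_simp
      linear_combination (-1 : ℂ) * this
    rw [hc, one_smul]
  · -- not ∂∂̄-exact
    rintro ⟨y, hy⟩
    -- P0 kills the image of Db
    have hDbv : ∀ v : Fin 6 → ℂ, P0 (Db (ExteriorAlgebra.ι ℂ v)) = 0 := by
      intro v
      rw [iota_eq_sum, map_sum, map_sum, Fin.sum_univ_six]
      simp only [map_smul, hb0, hb1, hb2, hb3, hb4, hb5, map_mul, map_zero,
        P0_w2, P0_w3, P0_w4, P0_w5, mul_zero, zero_mul, smul_zero]
      simp
    have hL1 : ∀ x : Lambda, P0 (Db x) = 0 := by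
      intro x
      have hx : x ∈ LinearMap.ker (P0.toLinearMap ∘ₗ Db) := by
        refine Lambda.mul_induction ?_ ?_ x
        · simp only [LinearMap.mem_ker, LinearMap.comp_apply, AlgHom.toLinearMap_apply, hDb1,
            map_zero]
        · intro v x hx
          simp only [LinearMap.mem_ker, LinearMap.comp_apply, AlgHom.toLinearMap_apply] at hx ⊢
          rw [hDbL, map_sub, map_mul, map_mul, hx, mul_zero, sub_zero, hDbv, zero_mul]
      simpa using hx
    -- P0 commutes with Dp on one-forms
    have hDpv : ∀ v : Fin 6 → ℂ, P0 (Dp (ExteriorAlgebra.ι ℂ v)) =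
        Dp (P0 (ExteriorAlgebra.ι ℂ v)) := by
      intro v
      rw [iota_eq_sum v, Fin.sum_univ_six]
      simp only [map_add, map_smul, hp0, hp1, hp2, hp3, hp4, hp5, map_mul,
        map_zero, P0_w0, P0_w1, P0_w2, P0_w3, P0_w4, P0_w5, zero_mul,
        smul_zero, add_zero]
    have hL2 : ∀ x : Lambda, P0 (Dp x) = Dp (P0 x) := by
      intro x
      have hx : x ∈ LinearMap.ker (P0.toLinearMap ∘ₗ Dp - Dp ∘ₗ P0.toLinearMap) := by
        refine Lambda.mul_induction ?_ ?_ x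
        · simp only [LinearMap.mem_ker, LinearMap.sub_apply, LinearMap.comp_apply,
            AlgHom.toLinearMap_apply, hDp1, map_zero, map_one, hDp1, sub_zero, sub_self]
        · intro v x hx
          simp only [LinearMap.mem_ker, LinearMap.sub_apply, LinearMap.comp_apply,
            AlgHom.toLinearMap_apply, sub_eq_zero] at hx ⊢
          have hPι : P0 (ExteriorAlgebra.ι ℂ v) = ExteriorAlgebra.ι ℂ (pr v) :=
            ExteriorAlgebra.map_apply_ι _ _
          rw [hDpL, map_sub, map_mul, map_mul, map_mul, hx, hDpv, hPι, hDpL (pr v) (P0 x)]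
      have := hx
      simp only [LinearMap.mem_ker, LinearMap.sub_apply, LinearMap.comp_apply,
        AlgHom.toLinearMap_apply, sub_eq_zero] at this
      exact this
    have hzero : w 1 * w 2 = 0 := by
      calc w 1 * w 2 = P0 (w 1 * w 2) := by rw [map_mul, P0_w1, P0_w2]
        _ = P0 (Dp (Db y)) := by rw [hy]
        _ = Dp (P0 (Db y)) := hL2 _
        _ = Dp 0 := by rw [hL1]
        _ = 0 := map_zero _
    have : (1 : ℂ) = 0 := by
      rw [← phi_w12, hzero, map_zero]
    exact one_ne_zero this

end
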